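/- Let A be a POVM on finite-dimensional H whose center {A(x)}'' ∩ {A(x)}' is strictly larger than ℂ·1, let Λ be a channel compatible with A, and let B be a POVM with every effect B(y) ∈ Fix(Λ*) and Fix(Λ*) ⊆ {A(x)}'. Then the joint observable G(x,y) := Σ_i K_{x,i}* B(y) K_{x,i} (equal to A(x)B(y)) is not informationally complete: there exist distinct pure states ψ₀ and ψ₁ = Uψ₀, with U = ⊕_n e^{iθ_n} P_n a nontrivial central unitary, yielding identical joint outcome distributions. -/

import Mathlib

open Matrix
open scoped ComplexOrder

abbrev Mat (d : ℕ) := Matrix (Fin d) (Fin d) ℂ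

/-- A quantum state (density operator). -/
def IsState {d : ℕ} (ρ : Mat d) : Prop := ρ.PosSemidef ∧ ρ.trace = 1

/-- A POVM (observable with finite outcome set). -/
def IsPOVM {d : ℕ} {ι : Type} [Fintype ι] (A : ι → Mat d) : Prop :=
  (∀ x, (A x).PosSemidef) ∧ ∑ x, A x = 1

/-- The pair of states `ρ₁, ρ₂` is distinguishable by the observable `A`. -/
def Distinguishes {d : ℕ} {ι : Type} [Fintype ι] (A : ι → Mat d) (ρ₁ ρ₂ : Mat d) : Prop :=
  ∃ x, (ρ₁ * A x).trace ≠ (ρ₂ * A x).trace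

/-- Informational completeness of an observable. -/
def InfoComplete {d : ℕ} {ι : Type} [Fintype ι] (A : ι → Mat d) : Prop :=
  ∀ ρ₁ ρ₂ : Mat d, IsState ρ₁ → IsState ρ₂ →
    (∀ x, (ρ₁ * A x).trace = (ρ₂ * A x).trace) → ρ₁ = ρ₂

namespace Matrix.PosSemidef

noncomputable def sqrt {d : ℕ} {M : Mat d} (hM : M.PosSemidef) : Mat d :=
  (hM.1.eigenvectorUnitary : Mat d) *
    Matrix.diagonal (fun i => ((Real.sqrt (hM.1.eigenvalues i) : ℝ) : ℂ)) *
    (hM.1.eigenvectorUnitary : Mat d)ᴴ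

lemma posSemidef_sqrt {d : ℕ} {M : Mat d} (hM : M.PosSemidef) : hM.sqrt.PosSemidef :=
  (Matrix.PosSemidef.diagonal (fun i => Complex.zero_le_real.mpr (Real.sqrt_nonneg _))).mul_mul_conjTranspose_same _

lemma sqrt_mul_self {d : ℕ} {M : Mat d} (hM : M.PosSemidef) : hM.sqrt * hM.sqrt = M := by
  have hVU : (hM.1.eigenvectorUnitary : Mat d)ᴴ * (hM.1.eigenvectorUnitary : Mat d) = 1 := by
    rw [← Matrix.star_eq_conjTranspose]
    exact (Matrix.mem_unitaryGroup_iff').1 hM.1.eigenvectorUnitary.2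
  have hspec : M = (hM.1.eigenvectorUnitary : Mat d) *
      Matrix.diagonal (Complex.ofReal ∘ hM.1.eigenvalues) * (hM.1.eigenvectorUnitary : Mat d)ᴴ := by
    rw [← Matrix.star_eq_conjTranspose]; exact hM.1.spectral_theorem
  conv_rhs => rw [hspec]
  simp only [sqrt]
  calc _ = (hM.1.eigenvectorUnitary : Mat d) *
        (Matrix.diagonal (fun i => ((Real.sqrt (hM.1.eigenvalues i) : ℝ) : ℂ)) *
          ((hM.1.eigenvectorUnitary : Mat d)ᴴ * (hM.1.eigenvectorUnitary : Mat d)) *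
          Matrix.diagonal (fun i => ((Real.sqrt (hM.1.eigenvalues i) : ℝ) : ℂ))) *
        (hM.1.eigenvectorUnitary : Mat d)ᴴ := by simp only [Matrix.mul_assoc]
    _ = _ := by
      rw [hVU, Matrix.mul_one, Matrix.diagonal_mul_diagonal]
      congr 2
      refine congrArg _ (funext fun i => ?_)
      rw [Function.comp_apply, ← Complex.ofReal_mul, Real.mul_self_sqrt (hM.eigenvalues_nonneg i)]

end Matrix.PosSemidef

namespace Stmt17


variable {d : ℕ}

lemma trace_ctms (N : Mat d) :
    (Nᴴ * N).trace = ((∑ i, ∑ j, Complex.normSq (N j i) : ℝ) : ℂ) := by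
  push_cast
  simp only [Matrix.trace, Matrix.diag_apply, Matrix.mul_apply, Matrix.conjTranspose_apply]
  refine Finset.sum_congr rfl fun i _ => Finset.sum_congr rfl fun j _ => ?_
  rw [Complex.normSq_eq_conj_mul_self]
  rfl

lemma eq_zero_of_sum_traces {α : Type*} [Fintype α] (N : α → Mat d)
    (h : ∑ a, ((N a)ᴴ * N a).trace = 0) : ∀ a, N a = 0 := by
  have h' : ∑ a, (∑ i, ∑ j, Complex.normSq (N a j i) : ℝ) = 0 := by
    have h2 : ((∑ a, ∑ i, ∑ j, Complex.normSq (N a j i) : ℝ) : ℂ) = 0 := by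
      push_cast
      rw [← h]
      exact (Finset.sum_congr rfl fun a _ => by rw [trace_ctms (N a)]; push_cast; ring).symm
    exact_mod_cast h2
  intro a
  have ha := (Finset.sum_eq_zero_iff_of_nonneg (fun a _ =>
      Finset.sum_nonneg fun i _ => Finset.sum_nonneg fun j _ => Complex.normSq_nonneg _)).1 h' a
      (Finset.mem_univ a)
  have hb := (Finset.sum_eq_zero_iff_of_nonneg (fun i _ =>
      Finset.sum_nonneg fun j _ => Complex.normSq_nonneg _)).1 ha
  ext j i
  have hc := (Finset.sum_eq_zero_iff_of_nonneg (fun j _ =>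
      Complex.normSq_nonneg _)).1 (hb i (Finset.mem_univ i)) j (Finset.mem_univ j)
  simpa using Complex.normSq_eq_zero.1 hc

lemma posSemidef_sum {α : Type*} [Fintype α] (f : α → Mat d) (h : ∀ a, (f a).PosSemidef) :
    (∑ a, f a).PosSemidef := by
  classical
  exact Finset.sum_induction f _ (fun a b ha hb => ha.add hb) Matrix.PosSemidef.zero
    (fun a _ => h a)

lemma posSemidef_real_smul {M : Mat d} (hM : M.PosSemidef) {r : ℝ} (hr : 0 ≤ r) :
    (((r : ℂ)) • M).PosSemidef := by
  constructor
  · rw [Matrix.IsHermitian, Matrix.conjTranspose_smul, hM.1]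
    congr 1
    simp [Complex.star_def, Complex.conj_ofReal]
  · intro x
    exact (hM.smul (Complex.zero_le_real.mpr hr)).2 x



variable {d : ℕ}

lemma posneg_decomp {X : Mat d} (hX : X.IsHermitian) :
    ∃ P N R : Mat d, P.PosSemidef ∧ N.PosSemidef ∧ X = P - N ∧
      R * X * R = P ∧ R * R = R ∧ R.IsHermitian ∧
      (∃ sp : ℝ, 0 ≤ sp ∧ P.trace = (sp : ℂ) ∧ (sp = 0 → P = 0)) ∧
      (∃ sn : ℝ, 0 ≤ sn ∧ N.trace = (sn : ℂ) ∧ (sn = 0 → N = 0)) := by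
  classical
  set V : Mat d := (hX.eigenvectorUnitary : Mat d) with hV
  have hVmem := hX.eigenvectorUnitary.2
  have hUV : V * Vᴴ = 1 := by
    rw [← Matrix.star_eq_conjTranspose]; exact (Matrix.mem_unitaryGroup_iff).1 hVmem
  have hVU : Vᴴ * V = 1 := by
    rw [← Matrix.star_eq_conjTranspose]; exact (Matrix.mem_unitaryGroup_iff').1 hVmem
  set e : Fin d → ℝ := hX.eigenvalues with he
  set Dp : Mat d := Matrix.diagonal (fun i => ((max (e i) 0 : ℝ) : ℂ)) with hDp
  set Dn : Mat d := Matrix.diagonal (fun i => ((max (-(e i)) 0 : ℝ) : ℂ)) with hDn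
  set S : Mat d := Matrix.diagonal (fun i => (if 0 < e i then (1 : ℂ) else 0)) with hS
  have hconj : ∀ D1 D2 : Mat d, (V * D1 * Vᴴ) * (V * D2 * Vᴴ) = V * (D1 * D2) * Vᴴ := by
    intro D1 D2
    calc (V * D1 * Vᴴ) * (V * D2 * Vᴴ) = V * D1 * (Vᴴ * V) * (D2 * Vᴴ) := by
          simp only [Matrix.mul_assoc]
      _ = V * (D1 * D2) * Vᴴ := by rw [hVU, Matrix.mul_one]; simp only [Matrix.mul_assoc]
  have htr : ∀ D : Mat d, (V * D * Vᴴ).trace = D.trace := by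
    intro D
    rw [Matrix.trace_mul_cycle, hVU, Matrix.one_mul]
  have hspec : X = V * Matrix.diagonal (Complex.ofReal ∘ e) * Vᴴ := by
    rw [← Matrix.star_eq_conjTranspose]; exact hX.spectral_theorem
  have hDpN : Dp - Dn = Matrix.diagonal (Complex.ofReal ∘ e) := by
    rw [hDp, hDn, Matrix.diagonal_sub]
    exact congrArg _ (funext fun i => by
      rw [← Complex.ofReal_sub, max_zero_sub_max_neg_zero_eq_self]; rfl)
  have hSDeS : S * Matrix.diagonal (Complex.ofReal ∘ e) * S = Dp := by
    rw [hS, hDp, Matrix.diagonal_mul_diagonal, Matrix.diagonal_mul_diagonal]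
    refine congrArg _ (funext fun i => ?_)
    by_cases h : 0 < e i
    · simp [h, max_eq_left h.le]
    · simp [h, max_eq_right (le_of_not_gt h)]
  have hSS : S * S = S := by
    rw [hS, Matrix.diagonal_mul_diagonal]
    refine congrArg _ (funext fun i => ?_)
    by_cases h : 0 < e i <;> simp [h]
  have hSH : Sᴴ = S := by
    rw [hS, Matrix.diagonal_conjTranspose]
    refine congrArg _ (funext fun i => ?_)
    by_cases h : 0 < e i <;> simp [h, Pi.star_apply]
  have hpsdDp : Dp.PosSemidef := Matrix.PosSemidef.diagonal
    (fun i => Complex.zero_le_real.mpr (le_max_right _ _))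
  have hpsdDn : Dn.PosSemidef := Matrix.PosSemidef.diagonal
    (fun i => Complex.zero_le_real.mpr (le_max_right _ _))
  refine ⟨V * Dp * Vᴴ, V * Dn * Vᴴ, V * S * Vᴴ, ?_, ?_, ?_, ?_, ?_, ?_, ?_, ?_⟩
  · exact hpsdDp.mul_mul_conjTranspose_same V
  · exact hpsdDn.mul_mul_conjTranspose_same V
  · rw [← Matrix.sub_mul, ← Matrix.mul_sub, hDpN, hspec]
  · rw [hspec, hconj, hconj, hSDeS]
  · rw [hconj, hSS]
  · show _ = _
    rw [Matrix.conjTranspose_mul, Matrix.conjTranspose_mul, Matrix.conjTranspose_conjTranspose,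
      hSH, Matrix.mul_assoc]
  · refine ⟨∑ i, max (e i) 0, Finset.sum_nonneg fun i _ => le_max_right _ _, ?_, ?_⟩
    · rw [htr, hDp, Matrix.trace_diagonal]
      push_cast; rfl
    · intro hsp
      have hall : ∀ i ∈ Finset.univ, max (e i) 0 = 0 :=
        (Finset.sum_eq_zero_iff_of_nonneg (fun i _ => le_max_right _ _)).1 hsp
      have hD0 : Dp = 0 := by
        rw [hDp]
        have hf : (fun i => ((max (e i) 0 : ℝ) : ℂ)) = fun _ => 0 := by
          funext i; rw [hall i (Finset.mem_univ i)]; simp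
        rw [hf, Matrix.diagonal_zero]
      rw [hD0, Matrix.mul_zero, Matrix.zero_mul]
  · refine ⟨∑ i, max (-(e i)) 0, Finset.sum_nonneg fun i _ => le_max_right _ _, ?_, ?_⟩
    · rw [htr, hDn, Matrix.trace_diagonal]
      push_cast; rfl
    · intro hsn
      have hall : ∀ i ∈ Finset.univ, max (-(e i)) 0 = 0 :=
        (Finset.sum_eq_zero_iff_of_nonneg (fun i _ => le_max_right _ _)).1 hsn
      have hD0 : Dn = 0 := by
        rw [hDn]
        have hf : (fun i => ((max (-(e i)) 0 : ℝ) : ℂ)) = fun _ => 0 := by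
          funext i; rw [hall i (Finset.mem_univ i)]; simp
        rw [hf, Matrix.diagonal_zero]
      rw [hD0, Matrix.mul_zero, Matrix.zero_mul]

lemma not_IC {P : Type} [Fintype P] (G : P → Mat d) (Δ : Mat d)
    (hH : Δ.IsHermitian) (h0 : Δ ≠ 0) (htr : Δ.trace = 0)
    (ho : ∀ p, (Δ * G p).trace = 0) : ¬ InfoComplete G := by
  intro hIC
  obtain ⟨Pp, Nn, R, hPp, hNn, hPN, -, -, -, ⟨sp, hsp0, hsptr, hspz⟩, ⟨sn, hsn0, hsntr, hsnz⟩⟩ :=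
    posneg_decomp hH
  have hspn : sp = sn := by
    have h1 : Pp.trace - Nn.trace = 0 := by rw [← Matrix.trace_sub, ← hPN, htr]
    rw [hsptr, hsntr, ← Complex.ofReal_sub] at h1
    have h2 := Complex.ofReal_eq_zero.1 h1
    linarith
  by_cases hz : sp = 0
  · exact h0 (by rw [hPN, hspz hz, hsnz (hspn ▸ hz), sub_zero])
  have hcz : ((sp⁻¹ : ℝ) : ℂ) ≠ 0 := by
    simpa using (inv_ne_zero hz)
  set c : ℂ := ((sp⁻¹ : ℝ) : ℂ) with hc
  have hst1 : IsState (c • Pp) :=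
    ⟨posSemidef_real_smul hPp (inv_nonneg.mpr hsp0), by
      rw [Matrix.trace_smul, hsptr, smul_eq_mul, ← Complex.ofReal_mul,
        inv_mul_cancel₀ hz, Complex.ofReal_one]⟩
  have hst2 : IsState (c • Nn) :=
    ⟨posSemidef_real_smul hNn (inv_nonneg.mpr hsp0), by
      rw [Matrix.trace_smul, hsntr, smul_eq_mul, ← Complex.ofReal_mul, ← hspn,
        inv_mul_cancel₀ hz, Complex.ofReal_one]⟩
  have heq : ∀ p, ((c • Pp) * G p).trace = ((c • Nn) * G p).trace := by
    intro p
    have hd : (Pp * G p).trace - (Nn * G p).trace = 0 := by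
      rw [← Matrix.trace_sub, ← Matrix.sub_mul, ← hPN, ho p]
    rw [Matrix.smul_mul, Matrix.smul_mul, Matrix.trace_smul, Matrix.trace_smul]
    rw [sub_eq_zero] at hd
    rw [hd]
  have := hIC _ _ hst1 hst2 heq
  have hPpNn : Pp = Nn := smul_right_injective _ hcz this
  exact h0 (by rw [hPN, hPpNn, sub_self])

lemma eig_orth {W : Mat d} (hW : W.IsHermitian) {lam mu : ℝ} {v x : Fin d → ℂ}
    (hv : W *ᵥ v = (mu : ℂ) • v) (hx : W *ᵥ x = (lam : ℂ) • x) (hne : lam ≠ mu) :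
    dotProduct (star v) x = 0 := by
  have h1 : dotProduct (star v) (W *ᵥ x) = (lam : ℂ) * dotProduct (star v) x := by
    rw [hx, dotProduct_smul, smul_eq_mul]
  have h2 : dotProduct (star v) (W *ᵥ x) = (mu : ℂ) * dotProduct (star v) x := by
    rw [Matrix.dotProduct_mulVec]
    have hvm : Matrix.vecMul (star v) W = (mu : ℂ) • star v := by
      have := Matrix.star_mulVec (M := W) (v := v)
      rw [hW.eq] at this
      rw [← this, hv]
      rw [star_smul]
      congr 1
      simp [Complex.star_def, Complex.conj_ofReal]
    rw [hvm, smul_dotProduct, smul_eq_mul]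
  have h3 : ((lam : ℂ) - (mu : ℂ)) * dotProduct (star v) x = 0 := by
    rw [sub_mul, ← h1, ← h2, sub_self]
  rcases mul_eq_zero.1 h3 with h | h
  · exfalso
    apply hne
    have : (lam : ℂ) = (mu : ℂ) := sub_eq_zero.1 h
    exact_mod_cast this
  · exact h

lemma trace_vecMulVec_mul (a b : Fin d → ℂ) (M : Mat d) :
    (Matrix.vecMulVec a b * M).trace = dotProduct b (M *ᵥ a) := by
  simp only [Matrix.trace, Matrix.diag_apply, Matrix.mul_apply, Matrix.vecMulVec_apply,
    Matrix.mulVec, dotProduct, Finset.mul_sum]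
  rw [Finset.sum_comm]
  exact Finset.sum_congr rfl fun k _ => Finset.sum_congr rfl fun i _ => by ring

lemma vecMulVec_mulVec (a b x : Fin d → ℂ) :
    Matrix.vecMulVec a b *ᵥ x = (dotProduct b x) • a := by
  funext i
  simp only [Matrix.mulVec, Matrix.vecMulVec_apply, dotProduct, Pi.smul_apply,
    smul_eq_mul, Finset.sum_mul]
  exact Finset.sum_congr rfl fun j _ => by ring

lemma vecMulVec_conjT (a b : Fin d → ℂ) :
    (Matrix.vecMulVec a b)ᴴ = Matrix.vecMulVec (star b) (star a) := by
  ext i j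
  simp [Matrix.conjTranspose_apply, Matrix.vecMulVec_apply, mul_comm]

lemma herm_flip {G : Mat d} (hG : Gᴴ = G) (u v : Fin d → ℂ) :
    dotProduct (star u) (G *ᵥ v) = star (dotProduct (star v) (G *ᵥ u)) := by
  rw [star_dotProduct]
  congr 1
  rw [Matrix.star_mulVec, ← Matrix.dotProduct_mulVec, hG]

section Channel

variable {ι J : Type} [Fintype ι] [Fintype J]

/-- The Schrödinger-picture channel. -/
noncomputable def LamF (K : ι → J → Mat d) (M : Mat d) : Mat d :=
  ∑ x, ∑ i, K x i * M * (K x i)ᴴ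

lemma trace_cycle4 (Km M C : Mat d) : (Km * M * Kmᴴ * C).trace = (M * (Kmᴴ * C * Km)).trace := by
  calc (Km * M * Kmᴴ * C).trace = ((Km * M) * (Kmᴴ * C)).trace := by simp only [Matrix.mul_assoc]
    _ = ((Kmᴴ * C) * (Km * M)).trace := Matrix.trace_mul_comm _ _
    _ = (((Kmᴴ * C) * Km) * M).trace := by simp only [Matrix.mul_assoc]
    _ = (M * ((Kmᴴ * C) * Km)).trace := Matrix.trace_mul_comm _ _

lemma lam_adjoint (K : ι → J → Mat d) (M C : Mat d) :
    (LamF K M * C).trace = (M * (∑ x, ∑ i, (K x i)ᴴ * C * K x i)).trace := by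
  rw [LamF, Finset.sum_mul, Matrix.trace_sum, Matrix.mul_sum, Matrix.trace_sum]
  refine Finset.sum_congr rfl fun x _ => ?_
  rw [Finset.sum_mul, Matrix.trace_sum, Matrix.mul_sum, Matrix.trace_sum]
  exact Finset.sum_congr rfl fun i _ => trace_cycle4 _ _ _

lemma lam_trace (K : ι → J → Mat d) (hsum : ∑ x, ∑ i, (K x i)ᴴ * K x i = 1) (M : Mat d) :
    (LamF K M).trace = M.trace := by
  have h := lam_adjoint K M 1
  rw [Matrix.mul_one] at h
  have h2 : (∑ x, ∑ i, (K x i)ᴴ * (1 : Mat d) * K x i) = 1 := by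
    have he : ∀ (x : ι) (i : J), (K x i)ᴴ * (1 : Mat d) * K x i = (K x i)ᴴ * K x i :=
      fun x i => by rw [Matrix.mul_one]
    simp_rw [he]
    exact hsum
  rw [h2, Matrix.mul_one] at h
  exact h

lemma lam_psd (K : ι → J → Mat d) (M : Mat d) (hM : M.PosSemidef) : (LamF K M).PosSemidef := by
  rw [LamF]
  exact posSemidef_sum _ fun x => posSemidef_sum _ fun i => hM.mul_mul_conjTranspose_same _

lemma lam_sub (K : ι → J → Mat d) (M C : Mat d) : LamF K (M - C) = LamF K M - LamF K C := by
  simp only [LamF, Matrix.mul_sub, Matrix.sub_mul, Finset.sum_sub_distrib]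

lemma lam_add (K : ι → J → Mat d) (M C : Mat d) : LamF K (M + C) = LamF K M + LamF K C := by
  simp only [LamF, Matrix.mul_add, Matrix.add_mul, Finset.sum_add_distrib]

lemma lam_smul (K : ι → J → Mat d) (c : ℂ) (M : Mat d) : LamF K (c • M) = c • LamF K M := by
  simp only [LamF, Matrix.mul_smul, Matrix.smul_mul]
  simp_rw [← Finset.smul_sum]

lemma trace_idem (Q : Mat d) (hQ : Q * Q = Q) (M : Mat d) :
    (Q * M * Q).trace = (M * Q).trace := by
  rw [Matrix.trace_mul_cycle, hQ, Matrix.trace_mul_comm]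

lemma exists_invariant_state (hd : 0 < d) (K : ι → J → Mat d)
    (hsum : ∑ x, ∑ i, (K x i)ᴴ * K x i = 1) :
    ∃ σ : Mat d, σ.PosSemidef ∧ σ ≠ 0 ∧ LamF K σ = σ := by
  classical
  have hfd : ∃ X : Mat d, X ≠ 0 ∧ LamF K X = X := by
    let f : Mat d →ₗ[ℂ] Mat d :=
      { toFun := fun X => LamF K X - X
        map_add' := by
          intro a b
          simp only [lam_add]
          abel
        map_smul' := by
          intro c a
          simp only [lam_smul, RingHom.id_apply, smul_sub] }
    have hns : ¬ Function.Surjective f := by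
      intro hs
      obtain ⟨Y, hY⟩ := hs 1
      have htr1 : ((1 : Mat d)).trace = 0 := by
        rw [← hY]
        show (LamF K Y - Y).trace = 0
        rw [Matrix.trace_sub, lam_trace K hsum, sub_self]
      rw [Matrix.trace_one] at htr1
      have hcne : (Fintype.card (Fin d) : ℂ) ≠ 0 := by
        simp only [Fintype.card_fin, ne_eq, Nat.cast_eq_zero]
        omega
      exact hcne htr1
    have hni : ¬ Function.Injective f := fun hi => hns (LinearMap.injective_iff_surjective.1 hi)
    rw [Function.not_injective_iff] at hni
    obtain ⟨a, b, hab, hne⟩ := hni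
    refine ⟨a - b, sub_ne_zero.mpr hne, ?_⟩
    have h0 : f (a - b) = 0 := by rw [map_sub, hab, sub_self]
    have h2 : LamF K (a - b) - (a - b) = 0 := h0
    rw [sub_eq_zero] at h2
    exact h2
  obtain ⟨X, hX0, hXfix⟩ := hfd
  have hct : ∀ M : Mat d, (LamF K M)ᴴ = LamF K Mᴴ := by
    intro M
    simp only [LamF, Matrix.conjTranspose_sum, Matrix.conjTranspose_mul,
      Matrix.conjTranspose_conjTranspose, Matrix.mul_assoc]
  have hctfix : LamF K Xᴴ = Xᴴ := by rw [← hct, hXfix]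
  have hherm : ∃ Y : Mat d, Y.IsHermitian ∧ Y ≠ 0 ∧ LamF K Y = Y := by
    by_cases hc : X + Xᴴ = 0
    · refine ⟨Complex.I • (X - Xᴴ), ?_, ?_, ?_⟩
      · show _ = _
        rw [Matrix.conjTranspose_smul, Matrix.conjTranspose_sub,
          Matrix.conjTranspose_conjTranspose]
        rw [show star Complex.I = -Complex.I from Complex.conj_I]
        rw [neg_smul, ← smul_neg, neg_sub]
      · have hXh : Xᴴ = -X := eq_neg_of_add_eq_zero_right hc
        rw [hXh, sub_neg_eq_add]
        have h2 : X + X ≠ 0 := by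
          rw [← two_smul ℂ X]
          exact smul_ne_zero two_ne_zero hX0
        exact smul_ne_zero Complex.I_ne_zero h2
      · rw [lam_smul, lam_sub, hXfix, hctfix]
    · refine ⟨X + Xᴴ, ?_, hc, ?_⟩
      · show _ = _
        rw [Matrix.conjTranspose_add, Matrix.conjTranspose_conjTranspose, add_comm]
      · rw [lam_add, hXfix, hctfix]
  obtain ⟨Y, hYH, hY0, hYfix⟩ := hherm
  obtain ⟨P, N, R, hPp, hNp, hYPN, hRYR, hRR, hRH, -, -⟩ := posneg_decomp hYH
  have hLP : (LamF K P).PosSemidef := lam_psd K P hPp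
  have hLN : (LamF K N).PosSemidef := lam_psd K N hNp
  have hsplit : LamF K P - LamF K N = Y := by rw [← lam_sub, ← hYPN, hYfix]
  have h1R : (1 - R) * (1 - R) = (1 - R) := by
    rw [Matrix.mul_sub, Matrix.mul_one, Matrix.sub_mul, Matrix.one_mul, hRR]
    abel
  have h1RH : (1 - R)ᴴ = (1 - R) := by
    rw [Matrix.conjTranspose_sub, Matrix.conjTranspose_one, hRH.eq]
  have e1 : (R * LamF K P * R).trace - (R * LamF K N * R).trace = P.trace := by
    rw [← Matrix.trace_sub]
    have hm : R * LamF K P * R - R * LamF K N * R = R * Y * R := by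
      rw [← hsplit, Matrix.mul_sub, Matrix.sub_mul]
    rw [hm, hRYR]
  have e2 : (R * LamF K P * R).trace + ((1 - R) * LamF K P * (1 - R)).trace = P.trace := by
    rw [trace_idem R hRR, trace_idem (1 - R) h1R, ← Matrix.trace_add, ← Matrix.mul_add]
    have hr1 : R + (1 - R) = (1 : Mat d) := by abel
    rw [hr1, Matrix.mul_one, lam_trace K hsum]
  set a : ℂ := ((1 - R) * LamF K P * (1 - R)).trace with ha
  set b : ℂ := (R * LamF K N * R).trace with hb
  have hab : a + b = 0 := by
    have h3 : (R * LamF K P * R).trace = P.trace - a := by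
      rw [← e2]; ring
    rw [h3] at e1
    linear_combination -e1
  set N1 : Mat d := hLP.sqrt * (1 - R) with hN1
  set N2 : Mat d := hLN.sqrt * R with hN2
  have hssP : hLP.sqrt * hLP.sqrt = LamF K P := hLP.sqrt_mul_self
  have hssN : hLN.sqrt * hLN.sqrt = LamF K N := hLN.sqrt_mul_self
  have haN : a = (N1ᴴ * N1).trace := by
    rw [hN1, Matrix.conjTranspose_mul, h1RH, hLP.posSemidef_sqrt.1.eq]
    have hmm : (1 - R) * hLP.sqrt * (hLP.sqrt * (1 - R)) = (1 - R) * LamF K P * (1 - R) := by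
      calc (1 - R) * hLP.sqrt * (hLP.sqrt * (1 - R))
          = (1 - R) * (hLP.sqrt * hLP.sqrt) * (1 - R) := by simp only [Matrix.mul_assoc]
        _ = (1 - R) * LamF K P * (1 - R) := by rw [hssP]
    rw [hmm]
  have hbN : b = (N2ᴴ * N2).trace := by
    rw [hN2, Matrix.conjTranspose_mul, hRH.eq, hLN.posSemidef_sqrt.1.eq]
    have hmm : R * hLN.sqrt * (hLN.sqrt * R) = R * LamF K N * R := by
      calc R * hLN.sqrt * (hLN.sqrt * R)
          = R * (hLN.sqrt * hLN.sqrt) * R := by simp only [Matrix.mul_assoc]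
        _ = R * LamF K N * R := by rw [hssN]
    rw [hmm]
  have hNz : ∀ t : Bool, (cond t N1 N2) = 0 := by
    apply eq_zero_of_sum_traces (fun t => cond t N1 N2)
    rw [Fintype.sum_bool]
    show (N1ᴴ * N1).trace + (N2ᴴ * N2).trace = 0
    rw [← haN, ← hbN, hab]
  have hN1z : N1 = 0 := hNz true
  have hN2z : N2 = 0 := hNz false
  have hLP1R : LamF K P * (1 - R) = 0 := by
    have hmm : hLP.sqrt * (hLP.sqrt * (1 - R)) = LamF K P * (1 - R) := by
      rw [← Matrix.mul_assoc, hssP]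
    rw [← hmm, ← hN1, hN1z, Matrix.mul_zero]
  have hLNR : LamF K N * R = 0 := by
    have hmm : hLN.sqrt * (hLN.sqrt * R) = LamF K N * R := by
      rw [← Matrix.mul_assoc, hssN]
    rw [← hmm, ← hN2, hN2z, Matrix.mul_zero]
  have hRLN : R * LamF K N = 0 := by
    have hcc := congrArg Matrix.conjTranspose hLNR
    rwa [Matrix.conjTranspose_mul, hRH.eq, hLN.isHermitian.eq, Matrix.conjTranspose_zero] at hcc
  have hLPR : LamF K P = LamF K P * R := by
    have h4 : LamF K P * 1 - LamF K P * R = 0 := by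
      rw [← Matrix.mul_sub]; exact hLP1R
    rw [Matrix.mul_one, sub_eq_zero] at h4
    exact h4
  have hRLP : LamF K P = R * LamF K P := by
    have hcc := congrArg Matrix.conjTranspose hLPR
    rwa [Matrix.conjTranspose_mul, hRH.eq, hLP.isHermitian.eq] at hcc
  have hfixP : LamF K P = P := by
    have h5 : LamF K P = R * LamF K P * R := by
      calc LamF K P = R * LamF K P := hRLP
        _ = R * (LamF K P * R) := by rw [← hLPR]
        _ = R * LamF K P * R := by rw [Matrix.mul_assoc]
    have h6 : LamF K P = LamF K N + Y := by rw [← hsplit]; abel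
    conv_lhs => rw [h5, h6]
    rw [Matrix.mul_add, Matrix.add_mul, hRLN, Matrix.zero_mul, zero_add, hRYR]
  have hfixN : LamF K N = N := by
    have h7 : LamF K N = LamF K P - Y := by rw [← hsplit]; abel
    rw [h7, hfixP, hYPN]
    abel
  by_cases hP0 : P = 0
  · refine ⟨N, hNp, fun hN0 => hY0 ?_, hfixN⟩
    rw [hYPN, hP0, hN0, sub_zero]
  · exact ⟨P, hPp, hP0, hfixP⟩

end Channel



variable {d : ℕ}

lemma comm_conjT {M C : Mat d} (hC : C.IsHermitian) (h : Commute M C) : Commute Mᴴ C := by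
  have h2 := congrArg Matrix.conjTranspose h.eq
  rw [Matrix.conjTranspose_mul, Matrix.conjTranspose_mul, hC.eq] at h2
  exact h2.symm

lemma exists_central_W {ι : Type} [Fintype ι] (A : ι → Mat d) (hAH : ∀ x, (A x).IsHermitian)
    (Z : Mat d) (hZ1 : ∀ x, Commute Z (A x))
    (hZ2 : ∀ Y : Mat d, (∀ x, Commute Y (A x)) → Commute Z Y)
    (hZ3 : ¬ ∃ c : ℂ, Z = c • 1) :
    ∃ W : Mat d, W.IsHermitian ∧ (∀ x, Commute W (A x)) ∧
      (∀ Y : Mat d, (∀ x, Commute Y (A x)) → Commute W Y) ∧ ¬ ∃ c : ℂ, W = c • 1 := by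
  have hZH1 : ∀ x, Commute Zᴴ (A x) := fun x => comm_conjT (hAH x) (hZ1 x)
  have hZH2 : ∀ Y : Mat d, (∀ x, Commute Y (A x)) → Commute Zᴴ Y := by
    intro Y hY
    have hYc : ∀ x, Commute Yᴴ (A x) := fun x => comm_conjT (hAH x) (hY x)
    have h2 := congrArg Matrix.conjTranspose (hZ2 Yᴴ hYc).eq
    rw [Matrix.conjTranspose_mul, Matrix.conjTranspose_mul,
      Matrix.conjTranspose_conjTranspose] at h2
    exact h2.symm
  by_cases h1 : ∃ a : ℂ, Z + Zᴴ = a • 1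
  · refine ⟨Complex.I • (Z - Zᴴ), ?_, ?_, ?_, ?_⟩
    · show _ = _
      rw [Matrix.conjTranspose_smul, Matrix.conjTranspose_sub,
        Matrix.conjTranspose_conjTranspose]
      rw [show star Complex.I = -Complex.I from Complex.conj_I]
      rw [neg_smul, ← smul_neg, neg_sub]
    · exact fun x => ((hZ1 x).sub_left (hZH1 x)).smul_left _
    · exact fun Y hY => ((hZ2 Y hY).sub_left (hZH2 Y hY)).smul_left _
    · rintro ⟨c, hc⟩
      obtain ⟨a, ha⟩ := h1
      apply hZ3
      have h2 : Z - Zᴴ = (-Complex.I * c) • 1 := by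
        have h3 := congrArg (fun M : Mat d => (-Complex.I) • M) hc
        simp only [smul_smul] at h3
        rw [show (-Complex.I * Complex.I) = (1 : ℂ) by
          rw [neg_mul, Complex.I_mul_I, neg_neg]] at h3
        rw [one_smul] at h3
        exact h3
      refine ⟨(2 : ℂ)⁻¹ * (a + (-Complex.I * c)), ?_⟩
      have hadd : (Z + Zᴴ) + (Z - Zᴴ) = (a + (-Complex.I * c)) • 1 := by
        rw [ha, h2, ← add_smul]
      have h2Z : (Z + Zᴴ) + (Z - Zᴴ) = (2 : ℂ) • Z := by
        rw [two_smul]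
        abel
      rw [h2Z] at hadd
      have h4 := congrArg (fun M : Mat d => ((2 : ℂ)⁻¹) • M) hadd
      simp only [smul_smul] at h4
      rw [show ((2 : ℂ)⁻¹ * 2) = (1 : ℂ) by norm_num, one_smul] at h4
      exact h4
  · refine ⟨Z + Zᴴ, ?_, ?_, ?_, h1⟩
    · show _ = _
      rw [Matrix.conjTranspose_add, Matrix.conjTranspose_conjTranspose, add_comm]
    · exact fun x => (hZ1 x).add_left (hZH1 x)
    · exact fun Y hY => (hZ2 Y hY).add_left (hZH2 Y hY)


lemma expand_comm_defect {d : ℕ} (Km b : Mat d) (hb : bᴴ = b) :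
    (Km * b - b * Km)ᴴ * (Km * b - b * Km)
      = b * (Kmᴴ * Km) * b - b * (Kmᴴ * b * Km) - (Kmᴴ * b * Km) * b + Kmᴴ * (b * b) * Km := by
  rw [Matrix.conjTranspose_sub, Matrix.conjTranspose_mul, Matrix.conjTranspose_mul, hb]
  noncomm_ring

lemma trace_vecMulVec {d : ℕ} (a b : Fin d → ℂ) :
    (Matrix.vecMulVec a b).trace = dotProduct b a := by
  simp only [Matrix.trace, Matrix.diag_apply, Matrix.vecMulVec_apply, dotProduct]
  exact Finset.sum_congr rfl fun i _ => mul_comm _ _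

end Stmt17

theorem stmt17 {d : ℕ} (hd : 0 < d) {ι J κ : Type} [Fintype ι] [Fintype J] [Fintype κ]
    (A : ι → Mat d) (hA : IsPOVM A)
    -- the center {A(x)}'' ∩ {A(x)}' is strictly larger than ℂ·1
    (hcenter : ∃ Z : Mat d, (∀ x, Commute Z (A x)) ∧
        (∀ Y : Mat d, (∀ x, Commute Y (A x)) → Commute Z Y) ∧
        ¬ ∃ c : ℂ, Z = c • 1)
    -- a channel compatible with A, given by Kraus operators K
    (K : ι → J → Mat d)
    (hK : ∀ x, A x = ∑ i, (K x i)ᴴ * K x i)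
    -- B is a POVM whose effects are fixed points of the dual channel
    (B : κ → Mat d) (hB : IsPOVM B)
    (hBfix : ∀ y, ∑ x, ∑ i, (K x i)ᴴ * B y * K x i = B y)
    -- Fix(Λ*) ⊆ {A(x)}'
    (hFixComm : ∀ X : Mat d, (∑ x, ∑ i, (K x i)ᴴ * X * K x i = X) →
        ∀ x, Commute X (A x)) :
    ¬ InfoComplete (fun p : ι × κ => ∑ i, (K p.1 i)ᴴ * B p.2 * K p.1 i) := by
  classical
  intro hIC
  obtain ⟨Z, hZ1, hZ2, hZ3⟩ := hcenter
  have hAH : ∀ x, (A x).IsHermitian := fun x => (hA.1 x).1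
  obtain ⟨W, hWH, hWA, hWC, hWns⟩ := Stmt17.exists_central_W A hAH Z hZ1 hZ2 hZ3
  have hsumK : ∑ x, ∑ i, (K x i)ᴴ * K x i = 1 := by
    rw [← hA.2]
    exact Finset.sum_congr rfl fun x _ => (hK x).symm
  obtain ⟨σ, hσp, hσ0, hσfix⟩ := Stmt17.exists_invariant_state hd K hsumK
  have hσH : σ.IsHermitian := hσp.1
  have hBH : ∀ y, (B y)ᴴ = B y := fun y => (hB.1 y).1
  have hBA : ∀ y x, Commute (B y) (A x) := fun y => hFixComm (B y) (hBfix y)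
  have hWB : ∀ y, Commute W (B y) := fun y => hWC (B y) (hBA y)
  -- Kraus operators commute with B on the support of σ
  have hMz : ∀ y x i, (K x i * B y - B y * K x i) * σ = 0 := by
    intro y
    set s := hσp.sqrt with hsdef
    have hss : s * s = σ := hσp.sqrt_mul_self
    have hsH : sᴴ = s := hσp.posSemidef_sqrt.1
    have key1 : (∑ x, ∑ i, (K x i * B y - B y * K x i)ᴴ * (K x i * B y - B y * K x i))
        = (∑ x, ∑ i, (K x i)ᴴ * (B y * B y) * K x i) - B y * B y := by
      have hterm : ∀ (x : ι) (i : J), (K x i * B y - B y * K x i)ᴴ * (K x i * B y - B y * K x i)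
          = B y * ((K x i)ᴴ * K x i) * B y - B y * ((K x i)ᴴ * B y * K x i)
            - ((K x i)ᴴ * B y * K x i) * B y + (K x i)ᴴ * (B y * B y) * K x i := fun x i =>
        Stmt17.expand_comm_defect (K x i) (B y) (hBH y)
      simp_rw [hterm]
      simp only [Finset.sum_add_distrib, Finset.sum_sub_distrib]
      have p1 : (∑ x, ∑ i, B y * ((K x i)ᴴ * K x i) * B y) = B y * B y := by
        simp_rw [← Finset.sum_mul, ← Finset.mul_sum]
        rw [hsumK, Matrix.mul_one]
      have p2 : (∑ x, ∑ i, B y * ((K x i)ᴴ * B y * K x i)) = B y * B y := by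
        simp_rw [← Finset.mul_sum]
        rw [hBfix y]
      have p3 : (∑ x, ∑ i, ((K x i)ᴴ * B y * K x i) * B y) = B y * B y := by
        simp_rw [← Finset.sum_mul]
        rw [hBfix y]
      rw [p1, p2, p3]
      abel
    have key2 : (σ * ((∑ x, ∑ i, (K x i)ᴴ * (B y * B y) * K x i) - B y * B y)).trace = 0 := by
      have hadj := Stmt17.lam_adjoint K σ (B y * B y)
      rw [hσfix] at hadj
      rw [Matrix.mul_sub, Matrix.trace_sub, ← hadj, sub_self]
    have key3 : ∀ x i, (K x i * B y - B y * K x i) * s = 0 := by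
      have he : ∀ p : ι × J,
          (((K p.1 p.2 * B y - B y * K p.1 p.2) * s)ᴴ * ((K p.1 p.2 * B y - B y * K p.1 p.2) * s)).trace
          = (σ * ((K p.1 p.2 * B y - B y * K p.1 p.2)ᴴ * (K p.1 p.2 * B y - B y * K p.1 p.2))).trace := by
        intro p
        rw [Matrix.conjTranspose_mul, hsH]
        calc (s * (K p.1 p.2 * B y - B y * K p.1 p.2)ᴴ * ((K p.1 p.2 * B y - B y * K p.1 p.2) * s)).trace
            = (s * ((K p.1 p.2 * B y - B y * K p.1 p.2)ᴴ * (K p.1 p.2 * B y - B y * K p.1 p.2)) * s).trace := by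
              simp only [Matrix.mul_assoc]
          _ = (s * s * ((K p.1 p.2 * B y - B y * K p.1 p.2)ᴴ * (K p.1 p.2 * B y - B y * K p.1 p.2))).trace := by
              rw [Matrix.trace_mul_cycle]
          _ = (σ * ((K p.1 p.2 * B y - B y * K p.1 p.2)ᴴ * (K p.1 p.2 * B y - B y * K p.1 p.2))).trace := by
              rw [hss]
      have hsumz : ∑ p : ι × J,
          (((K p.1 p.2 * B y - B y * K p.1 p.2) * s)ᴴ * ((K p.1 p.2 * B y - B y * K p.1 p.2) * s)).trace = 0 := by
        simp_rw [he]
        rw [Fintype.sum_prod_type]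
        have hc : ∑ x, ∑ i, (σ * ((K x i * B y - B y * K x i)ᴴ * (K x i * B y - B y * K x i))).trace
            = (σ * (∑ x, ∑ i, (K x i * B y - B y * K x i)ᴴ * (K x i * B y - B y * K x i))).trace := by
          rw [Matrix.mul_sum, Matrix.trace_sum]
          exact Finset.sum_congr rfl fun x _ => by rw [Matrix.mul_sum, Matrix.trace_sum]
        rw [hc, key1, key2]
      have hz := Stmt17.eq_zero_of_sum_traces _ hsumz
      intro x i
      exact hz (x, i)
    intro x i
    have hms : (K x i * B y - B y * K x i) * σ = ((K x i * B y - B y * K x i) * s) * s := by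
      rw [Matrix.mul_assoc, hss]
    rw [hms, key3 x i, Matrix.zero_mul]
  -- the joint observable acts like A x * B y on the support of σ
  have hGσ : ∀ x y, (∑ i, (K x i)ᴴ * B y * K x i) * σ = A x * B y * σ := by
    intro x y
    rw [Finset.sum_mul]
    have hterm : ∀ i, ((K x i)ᴴ * B y * K x i) * σ = ((K x i)ᴴ * K x i) * (B y * σ) := by
      intro i
      have h0 := hMz y x i
      rw [Matrix.sub_mul, sub_eq_zero] at h0
      calc ((K x i)ᴴ * B y * K x i) * σ = (K x i)ᴴ * (B y * K x i * σ) := by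
            simp only [Matrix.mul_assoc]
        _ = (K x i)ᴴ * (K x i * B y * σ) := by rw [← h0]
        _ = ((K x i)ᴴ * K x i) * (B y * σ) := by simp only [Matrix.mul_assoc]
    simp_rw [hterm]
    rw [← Finset.sum_mul, ← hK x, Matrix.mul_assoc]
  have hGH : ∀ x y, (∑ i, (K x i)ᴴ * B y * K x i).IsHermitian := by
    intro x y
    show _ = _
    rw [Matrix.conjTranspose_sum]
    refine Finset.sum_congr rfl fun i _ => ?_
    simp only [Matrix.conjTranspose_mul, Matrix.conjTranspose_conjTranspose, hBH y,
      Matrix.mul_assoc]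
  have hσG : ∀ x y, σ * (∑ i, (K x i)ᴴ * B y * K x i) = σ * (A x * B y) := by
    intro x y
    have h1 : σ * (∑ i, (K x i)ᴴ * B y * K x i) = ((∑ i, (K x i)ᴴ * B y * K x i) * σ)ᴴ := by
      rw [Matrix.conjTranspose_mul, hσH.eq, (hGH x y).eq]
    rw [h1, hGσ x y, Matrix.conjTranspose_mul, hσH.eq, Matrix.conjTranspose_mul, (hAH x).eq,
      hBH y, (hBA y x).eq]
  have hABW : ∀ x y, W * (A x * B y) = A x * B y * W := by
    intro x y
    calc W * (A x * B y) = (W * A x) * B y := by rw [Matrix.mul_assoc]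
      _ = (A x * W) * B y := by rw [(hWA x).eq]
      _ = A x * (W * B y) := by rw [Matrix.mul_assoc]
      _ = A x * (B y * W) := by rw [(hWB y).eq]
      _ = A x * B y * W := by rw [← Matrix.mul_assoc]
  by_cases hWσ : W * σ = σ * W
  · -- commuting case: use eigenvectors
    set V : Mat d := (hWH.eigenvectorUnitary : Mat d) with hV
    have hVmem := hWH.eigenvectorUnitary.2
    have hUV : V * Vᴴ = 1 := by
      rw [← Matrix.star_eq_conjTranspose]; exact (Matrix.mem_unitaryGroup_iff).1 hVmem
    set e : Fin d → ℝ := hWH.eigenvalues with he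
    have heig : ∀ j, W *ᵥ ⇑(hWH.eigenvectorBasis j) = (e j : ℂ) • ⇑(hWH.eigenvectorBasis j) := by
      intro j
      have h1 := hWH.mulVec_eigenvectorBasis j
      rw [h1]
      funext i
      simp only [Pi.smul_apply, Complex.real_smul, smul_eq_mul]
      rfl
    have hwex : ∃ j, σ *ᵥ ⇑(hWH.eigenvectorBasis j) ≠ 0 := by
      by_contra hap
      push_neg at hap
      apply hσ0
      have hcol : σ * V = 0 := by
        ext i j
        have h2 := congrFun (hap j) i
        simpa [Matrix.mul_apply, Matrix.mulVec, dotProduct, hV, Matrix.IsHermitian.eigenvectorUnitary_apply] using h2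
      calc σ = σ * (V * Vᴴ) := by rw [hUV, Matrix.mul_one]
        _ = (σ * V) * Vᴴ := by rw [Matrix.mul_assoc]
        _ = 0 := by rw [hcol, Matrix.zero_mul]
    obtain ⟨j, hu0⟩ := hwex
    set u : Fin d → ℂ := σ *ᵥ ⇑(hWH.eigenvectorBasis j) with hu
    have hWu : W *ᵥ u = (e j : ℂ) • u := by
      rw [hu, Matrix.mulVec_mulVec, hWσ, ← Matrix.mulVec_mulVec, heig j, Matrix.mulVec_smul]
    have hk : ∃ k, e k ≠ e j := by
      by_contra hap
      push_neg at hap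
      apply hWns
      refine ⟨(e j : ℂ), ?_⟩
      have hspecW : W = V * Matrix.diagonal (Complex.ofReal ∘ e) * Vᴴ := by
        rw [← Matrix.star_eq_conjTranspose]; exact hWH.spectral_theorem
      rw [hspecW]
      have hdiag : Matrix.diagonal (Complex.ofReal ∘ e) = (e j : ℂ) • (1 : Mat d) := by
        ext a b
        by_cases hab : a = b
        · subst hab
          simp [Matrix.diagonal_apply_eq, hap a]
        · simp [Matrix.diagonal_apply_ne _ hab, Matrix.one_apply_ne hab, hab]
      rw [hdiag, Matrix.mul_smul, Matrix.smul_mul, Matrix.mul_one, hUV]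
    obtain ⟨k, hkj⟩ := hk
    set v : Fin d → ℂ := ⇑(hWH.eigenvectorBasis k) with hv
    have hv0 : v ≠ 0 := by
      intro hvz
      have hnz := hWH.eigenvectorBasis.orthonormal.ne_zero k
      apply hnz
      ext i
      exact congrFun hvz i
    have hWv : W *ᵥ v = (e k : ℂ) • v := heig k
    have horth1 : dotProduct (star v) u = 0 :=
      Stmt17.eig_orth hWH hWv hWu (Ne.symm hkj)
    have horth2 : dotProduct (star u) v = 0 :=
      Stmt17.eig_orth hWH hWu hWv hkj
    set Δ : Mat d := Matrix.vecMulVec u (star v) + Matrix.vecMulVec v (star u) with hΔ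
    have hΔH : Δ.IsHermitian := by
      show _ = _
      rw [hΔ, Matrix.conjTranspose_add, Stmt17.vecMulVec_conjT, Stmt17.vecMulVec_conjT,
        star_star, star_star, add_comm]
    have hΔtr : Δ.trace = 0 := by
      rw [hΔ, Matrix.trace_add, Stmt17.trace_vecMulVec, Stmt17.trace_vecMulVec,
        horth1, horth2, add_zero]
    have hΔ0 : Δ ≠ 0 := by
      intro hz
      have hΔv : Δ *ᵥ v = (dotProduct (star v) v) • u := by
        rw [hΔ, Matrix.add_mulVec, Stmt17.vecMulVec_mulVec, Stmt17.vecMulVec_mulVec,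
          horth2, zero_smul, add_zero]
      rw [hz, Matrix.zero_mulVec] at hΔv
      have hvv : dotProduct (star v) v ≠ 0 :=
        fun h => hv0 (dotProduct_star_self_eq_zero.1 h)
      exact hu0 (by
        have := hΔv.symm
        rcases smul_eq_zero.1 (hΔv.symm) with h | h
        · exact absurd h hvv
        · exact h)
    have hΔG : ∀ p : ι × κ, (Δ * (∑ i, (K p.1 i)ᴴ * B p.2 * K p.1 i)).trace = 0 := by
      rintro ⟨x, y⟩
      have hGu : (∑ i, (K x i)ᴴ * B y * K x i) *ᵥ u = (A x * B y) *ᵥ u := by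
        rw [hu, Matrix.mulVec_mulVec, hGσ x y, ← Matrix.mulVec_mulVec, ← Matrix.mulVec_mulVec,
          Matrix.mulVec_mulVec]
      have hABu : W *ᵥ ((A x * B y) *ᵥ u) = (e j : ℂ) • ((A x * B y) *ᵥ u) := by
        rw [Matrix.mulVec_mulVec, hABW x y, ← Matrix.mulVec_mulVec, hWu, Matrix.mulVec_smul]
      have hfirst : dotProduct (star v) ((∑ i, (K x i)ᴴ * B y * K x i) *ᵥ u) = 0 := by
        rw [hGu]
        exact Stmt17.eig_orth hWH hWv hABu (Ne.symm hkj)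
      have hsecond : dotProduct (star u) ((∑ i, (K x i)ᴴ * B y * K x i) *ᵥ v) = 0 := by
        rw [Stmt17.herm_flip (hGH x y).eq, hfirst, star_zero]
      rw [hΔ, Matrix.add_mul, Matrix.trace_add, Stmt17.trace_vecMulVec_mul,
        Stmt17.trace_vecMulVec_mul, hfirst, hsecond, add_zero]
    exact Stmt17.not_IC _ Δ hΔH hΔ0 hΔtr hΔG hIC
  · -- non-commuting case: commutator with the central element
    set Δ : Mat d := Complex.I • (W * σ - σ * W) with hΔ
    have hΔH : Δ.IsHermitian := by
      show _ = _
      rw [hΔ, Matrix.conjTranspose_smul, Matrix.conjTranspose_sub, Matrix.conjTranspose_mul,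
        Matrix.conjTranspose_mul, hσH.eq, hWH.eq]
      rw [show star Complex.I = -Complex.I from Complex.conj_I]
      rw [neg_smul, ← smul_neg, neg_sub]
    have hΔtr : Δ.trace = 0 := by
      rw [hΔ, Matrix.trace_smul, Matrix.trace_sub, Matrix.trace_mul_comm, sub_self, smul_zero]
    have hΔ0 : Δ ≠ 0 :=
      smul_ne_zero Complex.I_ne_zero (sub_ne_zero.mpr hWσ)
    have hΔG : ∀ p : ι × κ, (Δ * (∑ i, (K p.1 i)ᴴ * B p.2 * K p.1 i)).trace = 0 := by
      rintro ⟨x, y⟩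
      rw [hΔ, Matrix.smul_mul, Matrix.trace_smul]
      have h1 : (W * σ - σ * W) * (∑ i, (K x i)ᴴ * B y * K x i)
          = W * (σ * (∑ i, (K x i)ᴴ * B y * K x i))
            - σ * (W * (∑ i, (K x i)ᴴ * B y * K x i)) := by
        rw [Matrix.sub_mul]
        simp only [Matrix.mul_assoc]
      rw [h1, Matrix.trace_sub]
      have t1 : (W * (σ * (∑ i, (K x i)ᴴ * B y * K x i))).trace
          = (σ * (A x * B y * W)).trace := by
        calc (W * (σ * (∑ i, (K x i)ᴴ * B y * K x i))).trace
            = (W * (σ * (A x * B y))).trace := by rw [hσG x y]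
          _ = ((σ * (A x * B y)) * W).trace := Matrix.trace_mul_comm _ _
          _ = (σ * (A x * B y * W)).trace := by simp only [Matrix.mul_assoc]
      have t2 : (σ * (W * (∑ i, (K x i)ᴴ * B y * K x i))).trace
          = (σ * (A x * B y * W)).trace := by
        calc (σ * (W * (∑ i, (K x i)ᴴ * B y * K x i))).trace
            = ((W * (∑ i, (K x i)ᴴ * B y * K x i)) * σ).trace := Matrix.trace_mul_comm _ _
          _ = (W * ((∑ i, (K x i)ᴴ * B y * K x i) * σ)).trace := by
              simp only [Matrix.mul_assoc]
          _ = (W * (A x * B y * σ)).trace := by rw [hGσ x y]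
          _ = ((A x * B y * σ) * W).trace := Matrix.trace_mul_comm _ _
          _ = ((A x * B y) * (σ * W)).trace := by simp only [Matrix.mul_assoc]
          _ = ((σ * W) * (A x * B y)).trace := Matrix.trace_mul_comm _ _
          _ = (σ * (W * (A x * B y))).trace := by simp only [Matrix.mul_assoc]
          _ = (σ * (A x * B y * W)).trace := by rw [hABW x y]
      rw [t1, t2, sub_self, smul_zero]
    exact Stmt17.not_IC _ Δ hΔH hΔ0 hΔtr hΔG hIC
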